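/- Let q₁, q₂, q₃, q₄ be positive integers with (q₁q₂, q₃q₄) = (q₁, q₂) = (q₃, q₄) = 1, and define λ(a, b, l, m, n) = ∑_{1 ≤ x,y,z ≤ ab, x²+y²+z²+z+1 ≡ 0 (mod a), x²+y²+z²+z+2 ≡ 0 (mod b)} e((lx+my+nz)/(ab)). Then λ(q₁q₂, q₃q₄, l, m, n) = λ(q₁, q₃, l·u, m·u, n·u) · λ(q₂, q₄, l·v, m·v, n·v), where u is the inverse of q₂q₄ modulo q₁q₃ and v is the inverse of q₁q₃ modulo q₂q₄. -/

import Mathlib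

open Finset

noncomputable def e (t : ℝ) : ℂ := Complex.exp (2 * Real.pi * Complex.I * t)

/-- λ(a, b, l, m, n): exponential sum over triples (x,y,z) mod ab with
x²+y²+z²+z+1 ≡ 0 (mod a) and x²+y²+z²+z+2 ≡ 0 (mod b). -/
noncomputable def lam (a b : ℕ) (l m n : ℤ) : ℂ :=
  ∑ x ∈ Finset.Icc 1 (a * b), ∑ y ∈ Finset.Icc 1 (a * b), ∑ z ∈ Finset.Icc 1 (a * b),
    if a ∣ (x ^ 2 + y ^ 2 + z ^ 2 + z + 1) ∧ b ∣ (x ^ 2 + y ^ 2 + z ^ 2 + z + 2) then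
      e (((l * (x : ℤ) + m * (y : ℤ) + n * (z : ℤ) : ℤ) : ℝ) / ((a * b : ℕ) : ℝ))
    else 0

lemma e_add (s t : ℝ) : e (s + t) = e s * e t := by
  simp [e, ← Complex.exp_add]; ring_nf

lemma e_int (k : ℤ) : e k = 1 := by
  simp only [e]
  convert Complex.exp_int_mul_two_pi_mul_I k using 2
  push_cast; ring

lemma e_int_add (k : ℤ) (t : ℝ) : e (k + t) = e t := by
  rw [e_add, e_int, one_mul]

lemma sum_Icc_one_eq_sum_range {f : ℕ → ℂ} {N : ℕ} (hN : 0 < N) (h : f N = f 0) :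
    ∑ x ∈ Icc 1 N, f x = ∑ x ∈ range N, f x := by
  have h1 : Icc 1 N = insert N (Ico 1 N) := by
    rw [Finset.Ico_insert_right hN]
  have h2 : range N = insert 0 (Ico 1 N) := by
    rw [Finset.range_eq_Ico, (Finset.insert_Ico_add_one_left_eq_Ico hN).symm, zero_add]
  rw [h1, h2, Finset.sum_insert (by simp), Finset.sum_insert (by simp), h]

lemma coprime_mul_dvd_iff {a b k : ℕ} (h : Nat.Coprime a b) : a * b ∣ k ↔ a ∣ k ∧ b ∣ k :=
  ⟨fun hd => ⟨(dvd_mul_right a b).trans hd, (dvd_mul_left b a).trans hd⟩,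
   fun ⟨ha, hb⟩ => h.mul_dvd_of_dvd_of_dvd ha hb⟩

lemma dvd_quad_iff {d x y z x' y' z' : ℕ} (c : ℕ) (hx : x ≡ x' [MOD d]) (hy : y ≡ y' [MOD d])
    (hz : z ≡ z' [MOD d]) :
    d ∣ (x ^ 2 + y ^ 2 + z ^ 2 + z + c) ↔ d ∣ (x' ^ 2 + y' ^ 2 + z' ^ 2 + z' + c) := by
  have h : x ^ 2 + y ^ 2 + z ^ 2 + z + c ≡ x' ^ 2 + y' ^ 2 + z' ^ 2 + z' + c [MOD d] :=
    ((((hx.pow 2).add (hy.pow 2)).add (hz.pow 2)).add hz).add (Nat.ModEq.refl c)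
  rw [← Nat.modEq_zero_iff_dvd, ← Nat.modEq_zero_iff_dvd]
  exact ⟨h.symm.trans, h.trans⟩

lemma e_div_eq_of_dvd {N : ℕ} (hN : 0 < N) {S T : ℤ} (h : (N : ℤ) ∣ S - T) :
    e ((S : ℝ) / (N : ℝ)) = e ((T : ℝ) / (N : ℝ)) := by
  obtain ⟨k, hk⟩ := h
  have hS : S = T + N * k := by linarith
  have hNR : (N : ℝ) ≠ 0 := Nat.cast_ne_zero.mpr hN.ne'
  have : (S : ℝ) / N = (k : ℝ) + (T : ℝ) / N := by
    rw [hS]; push_cast; field_simp; ring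
  rw [this, e_int_add]

lemma e_split {A B : ℕ} (hA : 0 < A) (hB : 0 < B) {S S₁ S₂ : ℤ}
    (h : ((A * B : ℕ) : ℤ) ∣ S - ((B : ℤ) * S₁ + (A : ℤ) * S₂)) :
    e ((S : ℝ) / ((A * B : ℕ) : ℝ)) = e ((S₁ : ℝ) / (A : ℝ)) * e ((S₂ : ℝ) / (B : ℝ)) := by
  rw [e_div_eq_of_dvd (Nat.mul_pos hA hB) h]
  have hAR : (A : ℝ) ≠ 0 := Nat.cast_ne_zero.mpr hA.ne'
  have hBR : (B : ℝ) ≠ 0 := Nat.cast_ne_zero.mpr hB.ne'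
  have : (((B : ℤ) * S₁ + (A : ℤ) * S₂ : ℤ) : ℝ) / ((A * B : ℕ) : ℝ)
      = (S₁ : ℝ) / A + (S₂ : ℝ) / B := by
    push_cast; field_simp
  rw [this, e_add]

lemma crt_dvd {A B : ℕ} (hco : Nat.Coprime A B) {u v : ℤ}
    (hu : (B : ℤ) * u ≡ 1 [ZMOD (A : ℤ)]) (hv : (A : ℤ) * v ≡ 1 [ZMOD (B : ℤ)]) (x : ℕ) :
    ((A * B : ℕ) : ℤ) ∣ (x : ℤ) -
      ((B : ℤ) * (u * ((x % A : ℕ) : ℤ)) + (A : ℤ) * (v * ((x % B : ℕ) : ℤ))) := by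
  have hgen : ∀ (C D : ℕ) (w : ℤ), (C : ℤ) * w ≡ 1 [ZMOD (D : ℤ)] →
      (D : ℤ) ∣ (x : ℤ) - (C : ℤ) * (w * ((x % D : ℕ) : ℤ)) := by
    intro C D w hw
    have h1 : (D : ℤ) ∣ (x : ℤ) - ((x % D : ℕ) : ℤ) := by
      refine ⟨(x / D : ℕ), ?_⟩
      have h := Nat.div_add_mod x D
      have h' : (D : ℤ) * ((x / D : ℕ) : ℤ) + ((x % D : ℕ) : ℤ) = (x : ℤ) := by
        exact_mod_cast h
      linarith
    have h2 : (D : ℤ) ∣ (C : ℤ) * w - 1 := by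
      have h := Int.ModEq.dvd hw
      rw [show (C : ℤ) * w - 1 = -(1 - (C : ℤ) * w) by ring]
      exact dvd_neg.mpr h
    have key : (x : ℤ) - (C : ℤ) * (w * ((x % D : ℕ) : ℤ))
        = ((x : ℤ) - ((x % D : ℕ) : ℤ)) - ((C : ℤ) * w - 1) * ((x % D : ℕ) : ℤ) := by ring
    rw [key]
    exact dvd_sub h1 (h2.mul_right _)
  have hAdvd : (A : ℤ) ∣ (x : ℤ) -
      ((B : ℤ) * (u * ((x % A : ℕ) : ℤ)) + (A : ℤ) * (v * ((x % B : ℕ) : ℤ))) := by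
    have := hgen B A u hu
    have key : (x : ℤ) - ((B : ℤ) * (u * ((x % A : ℕ) : ℤ)) + (A : ℤ) * (v * ((x % B : ℕ) : ℤ)))
        = ((x : ℤ) - (B : ℤ) * (u * ((x % A : ℕ) : ℤ))) - (A : ℤ) * (v * ((x % B : ℕ) : ℤ)) := by
      ring
    rw [key]
    exact dvd_sub this (Dvd.intro _ rfl)
  have hBdvd : (B : ℤ) ∣ (x : ℤ) -
      ((B : ℤ) * (u * ((x % A : ℕ) : ℤ)) + (A : ℤ) * (v * ((x % B : ℕ) : ℤ))) := by
    have := hgen A B v hv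
    have key : (x : ℤ) - ((B : ℤ) * (u * ((x % A : ℕ) : ℤ)) + (A : ℤ) * (v * ((x % B : ℕ) : ℤ)))
        = ((x : ℤ) - (A : ℤ) * (v * ((x % B : ℕ) : ℤ))) - (B : ℤ) * (u * ((x % A : ℕ) : ℤ)) := by
      ring
    rw [key]
    exact dvd_sub this (Dvd.intro _ rfl)
  have : ((A * B : ℕ) : ℤ) = (A : ℤ) * (B : ℤ) := by push_cast; ring
  rw [this]
  exact (Nat.isCoprime_iff_coprime.mpr hco).mul_dvd hAdvd hBdvd

/-- CRT combination of residues. -/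
def crt (A B : ℕ) (u v : ℤ) (s t : ℕ) : ℕ :=
  (((B : ℤ) * (u * (s : ℤ)) + (A : ℤ) * (v * (t : ℤ))) % ((A * B : ℕ) : ℤ)).toNat

lemma crt_cast {A B : ℕ} (hAB : 0 < A * B) (u v : ℤ) (s t : ℕ) :
    ((crt A B u v s t : ℕ) : ℤ)
      = ((B : ℤ) * (u * (s : ℤ)) + (A : ℤ) * (v * (t : ℤ))) % ((A * B : ℕ) : ℤ) := by
  have : (0 : ℤ) < ((A * B : ℕ) : ℤ) := by exact_mod_cast hAB
  exact Int.toNat_of_nonneg (Int.emod_nonneg _ this.ne')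

lemma crt_lt {A B : ℕ} (hAB : 0 < A * B) (u v : ℤ) (s t : ℕ) :
    crt A B u v s t < A * B := by
  have h : (0 : ℤ) < ((A * B : ℕ) : ℤ) := by exact_mod_cast hAB
  have := Int.emod_lt_of_pos ((B : ℤ) * (u * (s : ℤ)) + (A : ℤ) * (v * (t : ℤ))) h
  have hcast := crt_cast hAB u v s t
  omega

lemma crt_left_inv {A B : ℕ} (hA : 0 < A) (hB : 0 < B) (hco : Nat.Coprime A B) {u v : ℤ}
    (hu : (B : ℤ) * u ≡ 1 [ZMOD (A : ℤ)]) (hv : (A : ℤ) * v ≡ 1 [ZMOD (B : ℤ)])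
    {x : ℕ} (hx : x < A * B) : crt A B u v (x % A) (x % B) = x := by
  have hAB : 0 < A * B := Nat.mul_pos hA hB
  have hd := crt_dvd hco hu hv x
  set C : ℤ := (B : ℤ) * (u * ((x % A : ℕ) : ℤ)) + (A : ℤ) * (v * ((x % B : ℕ) : ℤ)) with hC
  have hmod : C % ((A * B : ℕ) : ℤ) = (x : ℤ) % ((A * B : ℕ) : ℤ) :=
    (Int.modEq_iff_dvd.mpr hd).symm.symm
  have hxlt : (x : ℤ) % ((A * B : ℕ) : ℤ) = (x : ℤ) :=
    Int.emod_eq_of_lt (Int.natCast_nonneg x) (by exact_mod_cast hx)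
  have := crt_cast hAB u v (x % A) (x % B)
  rw [← hC] at this
  omega

lemma crt_mod_gen {D C : ℕ} {w : ℤ} (hw : (C : ℤ) * w ≡ 1 [ZMOD (D : ℤ)])
    {M c : ℕ} (hDM : D ∣ M) {s : ℕ} (hs : s < D) (R X : ℤ)
    (hX : X = (C : ℤ) * (w * (s : ℤ)) + (D : ℤ) * R)
    (hc : (c : ℤ) = X % ((M : ℕ) : ℤ)) :
    c % D = s := by
  have hDdvdM : (D : ℤ) ∣ (M : ℤ) := Int.natCast_dvd_natCast.mpr hDM
  have h1 : (D : ℤ) ∣ X % (M : ℤ) - X := by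
    refine dvd_trans hDdvdM ⟨-(X / (M : ℤ)), ?_⟩
    rw [Int.emod_def]; ring
  have h2 : (D : ℤ) ∣ (C : ℤ) * w - 1 := by
    have h := Int.ModEq.dvd hw
    rw [show (C : ℤ) * w - 1 = -(1 - (C : ℤ) * w) by ring]
    exact dvd_neg.mpr h
  have h3 : (D : ℤ) ∣ X - (s : ℤ) := by
    have key : X - (s : ℤ) = ((C : ℤ) * w - 1) * (s : ℤ) + (D : ℤ) * R := by rw [hX]; ring
    rw [key]
    exact dvd_add (h2.mul_right _) (Dvd.intro _ rfl)
  have h4 : (D : ℤ) ∣ (c : ℤ) - (s : ℤ) := by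
    have key : (c : ℤ) - (s : ℤ) = (X % (M : ℤ) - X) + (X - (s : ℤ)) := by rw [hc]; ring
    rw [key]
    exact dvd_add h1 h3
  have h5 : s ≡ c [MOD D] := Nat.modEq_iff_dvd.mpr h4
  exact Eq.trans (h5.symm : c % D = s % D) (Nat.mod_eq_of_lt hs)

lemma crt_right_inv_left {A B : ℕ} (hA : 0 < A) (hB : 0 < B) {u v : ℤ}
    (hu : (B : ℤ) * u ≡ 1 [ZMOD (A : ℤ)]) {s t : ℕ} (hs : s < A) :
    crt A B u v s t % A = s := by
  refine crt_mod_gen hu (dvd_mul_right A B) hs (v * (t : ℤ)) _ rfl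
    (crt_cast (Nat.mul_pos hA hB) u v s t)

lemma crt_right_inv_right {A B : ℕ} (hA : 0 < A) (hB : 0 < B) {u v : ℤ}
    (hv : (A : ℤ) * v ≡ 1 [ZMOD (B : ℤ)]) {s t : ℕ} (ht : t < B) :
    crt A B u v s t % B = t := by
  refine crt_mod_gen hv (dvd_mul_left B A) ht (u * (s : ℤ))
    ((B : ℤ) * (u * (s : ℤ)) + (A : ℤ) * (v * (t : ℤ))) (by ring)
    (crt_cast (Nat.mul_pos hA hB) u v s t)

lemma summand_congr {a b : ℕ} (hab : 0 < a * b) (l m n : ℤ) {x y z x' y' z' : ℕ}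
    (hxa : x ≡ x' [MOD a]) (hya : y ≡ y' [MOD a]) (hza : z ≡ z' [MOD a])
    (hxb : x ≡ x' [MOD b]) (hyb : y ≡ y' [MOD b]) (hzb : z ≡ z' [MOD b])
    (he : ((a * b : ℕ) : ℤ) ∣ (l * (x : ℤ) + m * (y : ℤ) + n * (z : ℤ))
      - (l * (x' : ℤ) + m * (y' : ℤ) + n * (z' : ℤ))) :
    (if a ∣ (x ^ 2 + y ^ 2 + z ^ 2 + z + 1) ∧ b ∣ (x ^ 2 + y ^ 2 + z ^ 2 + z + 2) then
      e (((l * (x : ℤ) + m * (y : ℤ) + n * (z : ℤ) : ℤ) : ℝ) / ((a * b : ℕ) : ℝ)) else 0)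
    = (if a ∣ (x' ^ 2 + y' ^ 2 + z' ^ 2 + z' + 1) ∧ b ∣ (x' ^ 2 + y' ^ 2 + z' ^ 2 + z' + 2) then
      e (((l * (x' : ℤ) + m * (y' : ℤ) + n * (z' : ℤ) : ℤ) : ℝ) / ((a * b : ℕ) : ℝ)) else 0) := by
  exact if_congr (and_congr (dvd_quad_iff 1 hxa hya hza) (dvd_quad_iff 2 hxb hyb hzb))
    (e_div_eq_of_dvd hab he) rfl

lemma triple_Icc_range (N : ℕ) (hN : 0 < N) (F : ℕ → ℕ → ℕ → ℂ)
    (h1 : ∀ y z, F N y z = F 0 y z) (h2 : ∀ x z, F x N z = F x 0 z)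
    (h3 : ∀ x y, F x y N = F x y 0) :
    ∑ x ∈ Icc 1 N, ∑ y ∈ Icc 1 N, ∑ z ∈ Icc 1 N, F x y z
      = ∑ x ∈ range N, ∑ y ∈ range N, ∑ z ∈ range N, F x y z := by
  rw [sum_Icc_one_eq_sum_range hN
    (Finset.sum_congr rfl fun y _ => Finset.sum_congr rfl fun z _ => h1 y z)]
  refine Finset.sum_congr rfl fun x _ => ?_
  rw [sum_Icc_one_eq_sum_range hN (Finset.sum_congr rfl fun z _ => h2 x z)]
  refine Finset.sum_congr rfl fun y _ => ?_
  exact sum_Icc_one_eq_sum_range hN (h3 x y)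

lemma lam_sum_range (a b : ℕ) (ha : 0 < a) (hb : 0 < b) (l m n : ℤ) :
    lam a b l m n = ∑ x ∈ range (a * b), ∑ y ∈ range (a * b), ∑ z ∈ range (a * b),
      (if a ∣ (x ^ 2 + y ^ 2 + z ^ 2 + z + 1) ∧ b ∣ (x ^ 2 + y ^ 2 + z ^ 2 + z + 2) then
        e (((l * (x : ℤ) + m * (y : ℤ) + n * (z : ℤ) : ℤ) : ℝ) / ((a * b : ℕ) : ℝ))
      else 0) := by
  have hab : 0 < a * b := Nat.mul_pos ha hb
  have hma : (a * b) ≡ 0 [MOD a] := Nat.modEq_zero_iff_dvd.mpr (dvd_mul_right a b)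
  have hmb : (a * b) ≡ 0 [MOD b] := Nat.modEq_zero_iff_dvd.mpr (dvd_mul_left b a)
  rw [lam]
  refine triple_Icc_range (a * b) hab _ ?_ ?_ ?_
  · intro y z
    exact summand_congr hab l m n hma (Nat.ModEq.refl _) (Nat.ModEq.refl _)
      hmb (Nat.ModEq.refl _) (Nat.ModEq.refl _) ⟨l, by push_cast; ring⟩
  · intro x z
    exact summand_congr hab l m n (Nat.ModEq.refl _) hma (Nat.ModEq.refl _)
      (Nat.ModEq.refl _) hmb (Nat.ModEq.refl _) ⟨m, by push_cast; ring⟩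
  · intro x y
    exact summand_congr hab l m n (Nat.ModEq.refl _) (Nat.ModEq.refl _) hma
      (Nat.ModEq.refl _) (Nat.ModEq.refl _) hmb ⟨n, by push_cast; ring⟩

lemma triple_prod (s : Finset ℕ) (F : ℕ → ℕ → ℕ → ℂ) :
    ∑ x ∈ s, ∑ y ∈ s, ∑ z ∈ s, F x y z = ∑ p ∈ s ×ˢ s ×ˢ s, F p.1 p.2.1 p.2.2 := by
  simp only [Finset.sum_product]

theorem lam_multiplicative (q₁ q₂ q₃ q₄ : ℕ) (h₁ : 0 < q₁) (h₂ : 0 < q₂) (h₃ : 0 < q₃)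
    (h₄ : 0 < q₄) (hco₁ : Nat.Coprime (q₁ * q₂) (q₃ * q₄)) (hco₂ : Nat.Coprime q₁ q₂)
    (hco₃ : Nat.Coprime q₃ q₄) (l m n : ℤ) (u v : ℤ)
    (hu : ((q₂ * q₄ : ℕ) : ℤ) * u ≡ 1 [ZMOD ((q₁ * q₃ : ℕ) : ℤ)])
    (hv : ((q₁ * q₃ : ℕ) : ℤ) * v ≡ 1 [ZMOD ((q₂ * q₄ : ℕ) : ℤ)]) :
    lam (q₁ * q₂) (q₃ * q₄) l m n =
      lam q₁ q₃ (l * u) (m * u) (n * u) * lam q₂ q₄ (l * v) (m * v) (n * v) := by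
  have hA : 0 < q₁ * q₃ := Nat.mul_pos h₁ h₃
  have hB : 0 < q₂ * q₄ := Nat.mul_pos h₂ h₄
  have c14 : Nat.Coprime q₁ q₄ :=
    (Nat.Coprime.coprime_dvd_left (dvd_mul_right q₁ q₂) hco₁).coprime_dvd_right
      (dvd_mul_left q₄ q₃)
  have c23 : Nat.Coprime q₂ q₃ :=
    (Nat.Coprime.coprime_dvd_left (dvd_mul_left q₂ q₁) hco₁).coprime_dvd_right
      (dvd_mul_right q₃ q₄)
  have hAB : Nat.Coprime (q₁ * q₃) (q₂ * q₄) :=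
    Nat.Coprime.mul (hco₂.mul_right c14) (c23.symm.mul_right hco₃)
  rw [lam_sum_range _ _ (Nat.mul_pos h₁ h₂) (Nat.mul_pos h₃ h₄),
    lam_sum_range _ _ h₁ h₃, lam_sum_range _ _ h₂ h₄,
    show (q₁ * q₂) * (q₃ * q₄) = (q₁ * q₃) * (q₂ * q₄) from mul_mul_mul_comm q₁ q₂ q₃ q₄]
  set A := q₁ * q₃ with hAdef
  set B := q₂ * q₄ with hBdef
  -- summand equality
  have main : ∀ x y z : ℕ,
      (if q₁ * q₂ ∣ (x ^ 2 + y ^ 2 + z ^ 2 + z + 1) ∧ q₃ * q₄ ∣ (x ^ 2 + y ^ 2 + z ^ 2 + z + 2)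
        then e (((l * (x : ℤ) + m * (y : ℤ) + n * (z : ℤ) : ℤ) : ℝ) / ((A * B : ℕ) : ℝ)) else 0)
      = (if q₁ ∣ ((x % A) ^ 2 + (y % A) ^ 2 + (z % A) ^ 2 + (z % A) + 1) ∧
            q₃ ∣ ((x % A) ^ 2 + (y % A) ^ 2 + (z % A) ^ 2 + (z % A) + 2)
          then e ((((l * u) * ((x % A : ℕ) : ℤ) + (m * u) * ((y % A : ℕ) : ℤ)
            + (n * u) * ((z % A : ℕ) : ℤ) : ℤ) : ℝ) / ((q₁ * q₃ : ℕ) : ℝ)) else 0)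
        * (if q₂ ∣ ((x % B) ^ 2 + (y % B) ^ 2 + (z % B) ^ 2 + (z % B) + 1) ∧
            q₄ ∣ ((x % B) ^ 2 + (y % B) ^ 2 + (z % B) ^ 2 + (z % B) + 2)
          then e ((((l * v) * ((x % B : ℕ) : ℤ) + (m * v) * ((y % B : ℕ) : ℤ)
            + (n * v) * ((z % B : ℕ) : ℤ) : ℤ) : ℝ) / ((q₂ * q₄ : ℕ) : ℝ)) else 0) := by
    intro x y z
    have mA : ∀ w : ℕ, ∀ d : ℕ, d ∣ A → w ≡ w % A [MOD d] := fun w d hd =>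
      Nat.ModEq.of_dvd hd (Nat.mod_modEq w A).symm
    have mB : ∀ w : ℕ, ∀ d : ℕ, d ∣ B → w ≡ w % B [MOD d] := fun w d hd =>
      Nat.ModEq.of_dvd hd (Nat.mod_modEq w B).symm
    have d1A : q₁ ∣ A := dvd_mul_right q₁ q₃
    have d3A : q₃ ∣ A := dvd_mul_left q₃ q₁
    have d2B : q₂ ∣ B := dvd_mul_right q₂ q₄
    have d4B : q₄ ∣ B := dvd_mul_left q₄ q₂
    have hc1 : (q₁ * q₂ ∣ (x ^ 2 + y ^ 2 + z ^ 2 + z + 1)) ↔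
        (q₁ ∣ ((x % A) ^ 2 + (y % A) ^ 2 + (z % A) ^ 2 + (z % A) + 1) ∧
         q₂ ∣ ((x % B) ^ 2 + (y % B) ^ 2 + (z % B) ^ 2 + (z % B) + 1)) := by
      rw [coprime_mul_dvd_iff hco₂]
      exact and_congr (dvd_quad_iff 1 (mA x q₁ d1A) (mA y q₁ d1A) (mA z q₁ d1A))
        (dvd_quad_iff 1 (mB x q₂ d2B) (mB y q₂ d2B) (mB z q₂ d2B))
    have hc2 : (q₃ * q₄ ∣ (x ^ 2 + y ^ 2 + z ^ 2 + z + 2)) ↔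
        (q₃ ∣ ((x % A) ^ 2 + (y % A) ^ 2 + (z % A) ^ 2 + (z % A) + 2) ∧
         q₄ ∣ ((x % B) ^ 2 + (y % B) ^ 2 + (z % B) ^ 2 + (z % B) + 2)) := by
      rw [coprime_mul_dvd_iff hco₃]
      exact and_congr (dvd_quad_iff 2 (mA x q₃ d3A) (mA y q₃ d3A) (mA z q₃ d3A))
        (dvd_quad_iff 2 (mB x q₄ d4B) (mB y q₄ d4B) (mB z q₄ d4B))
    have hdx := crt_dvd hAB hu hv x
    have hdy := crt_dvd hAB hu hv y
    have hdz := crt_dvd hAB hu hv z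
    have hE : e (((l * (x : ℤ) + m * (y : ℤ) + n * (z : ℤ) : ℤ) : ℝ) / ((A * B : ℕ) : ℝ))
        = e ((((l * u) * ((x % A : ℕ) : ℤ) + (m * u) * ((y % A : ℕ) : ℤ)
            + (n * u) * ((z % A : ℕ) : ℤ) : ℤ) : ℝ) / ((A : ℕ) : ℝ))
          * e ((((l * v) * ((x % B : ℕ) : ℤ) + (m * v) * ((y % B : ℕ) : ℤ)
            + (n * v) * ((z % B : ℕ) : ℤ) : ℤ) : ℝ) / ((B : ℕ) : ℝ)) := by
      refine e_split hA hB ?_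
      have key : (l * (x : ℤ) + m * (y : ℤ) + n * (z : ℤ))
          - ((B : ℤ) * ((l * u) * ((x % A : ℕ) : ℤ) + (m * u) * ((y % A : ℕ) : ℤ)
              + (n * u) * ((z % A : ℕ) : ℤ))
            + (A : ℤ) * ((l * v) * ((x % B : ℕ) : ℤ) + (m * v) * ((y % B : ℕ) : ℤ)
              + (n * v) * ((z % B : ℕ) : ℤ)))
          = l * ((x : ℤ) - ((B : ℤ) * (u * ((x % A : ℕ) : ℤ)) + (A : ℤ) * (v * ((x % B : ℕ) : ℤ))))
          + m * ((y : ℤ) - ((B : ℤ) * (u * ((y % A : ℕ) : ℤ)) + (A : ℤ) * (v * ((y % B : ℕ) : ℤ))))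
          + n * ((z : ℤ) - ((B : ℤ) * (u * ((z % A : ℕ) : ℤ)) + (A : ℤ) * (v * ((z % B : ℕ) : ℤ))))
          := by ring
      rw [key]
      exact dvd_add (dvd_add (hdx.mul_left l) (hdy.mul_left m)) (hdz.mul_left n)
    rw [ite_zero_mul_ite_zero, hE]
    exact if_congr (by rw [hc1, hc2]; tauto) rfl rfl
  calc
    ∑ x ∈ range (A * B), ∑ y ∈ range (A * B), ∑ z ∈ range (A * B),
        (if q₁ * q₂ ∣ (x ^ 2 + y ^ 2 + z ^ 2 + z + 1) ∧
            q₃ * q₄ ∣ (x ^ 2 + y ^ 2 + z ^ 2 + z + 2)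
          then e (((l * (x : ℤ) + m * (y : ℤ) + n * (z : ℤ) : ℤ) : ℝ) / ((A * B : ℕ) : ℝ)) else 0)
      = ∑ p ∈ (range (A * B)) ×ˢ (range (A * B)) ×ˢ (range (A * B)),
          (if q₁ * q₂ ∣ (p.1 ^ 2 + p.2.1 ^ 2 + p.2.2 ^ 2 + p.2.2 + 1) ∧
              q₃ * q₄ ∣ (p.1 ^ 2 + p.2.1 ^ 2 + p.2.2 ^ 2 + p.2.2 + 2)
            then e (((l * (p.1 : ℤ) + m * (p.2.1 : ℤ) + n * (p.2.2 : ℤ) : ℤ) : ℝ)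
              / ((A * B : ℕ) : ℝ)) else 0) := triple_prod _ _
    _ = ∑ q ∈ ((range A ×ˢ range A ×ˢ range A) ×ˢ (range B ×ˢ range B ×ˢ range B)),
          ((if q₁ ∣ (q.1.1 ^ 2 + q.1.2.1 ^ 2 + q.1.2.2 ^ 2 + q.1.2.2 + 1) ∧
              q₃ ∣ (q.1.1 ^ 2 + q.1.2.1 ^ 2 + q.1.2.2 ^ 2 + q.1.2.2 + 2)
            then e ((((l * u) * (q.1.1 : ℤ) + (m * u) * (q.1.2.1 : ℤ)
              + (n * u) * (q.1.2.2 : ℤ) : ℤ) : ℝ) / ((q₁ * q₃ : ℕ) : ℝ)) else 0)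
          * (if q₂ ∣ (q.2.1 ^ 2 + q.2.2.1 ^ 2 + q.2.2.2 ^ 2 + q.2.2.2 + 1) ∧
              q₄ ∣ (q.2.1 ^ 2 + q.2.2.1 ^ 2 + q.2.2.2 ^ 2 + q.2.2.2 + 2)
            then e ((((l * v) * (q.2.1 : ℤ) + (m * v) * (q.2.2.1 : ℤ)
              + (n * v) * (q.2.2.2 : ℤ) : ℤ) : ℝ) / ((q₂ * q₄ : ℕ) : ℝ)) else 0)) := by
        refine Finset.sum_nbij'
          (fun p => ((p.1 % A, p.2.1 % A, p.2.2 % A), (p.1 % B, p.2.1 % B, p.2.2 % B)))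
          (fun q => (crt A B u v q.1.1 q.2.1, crt A B u v q.1.2.1 q.2.2.1,
            crt A B u v q.1.2.2 q.2.2.2)) ?_ ?_ ?_ ?_ ?_
        · intro p hp
          simp only [Finset.mem_product, Finset.mem_range] at *
          exact ⟨⟨Nat.mod_lt _ hA, Nat.mod_lt _ hA, Nat.mod_lt _ hA⟩,
            Nat.mod_lt _ hB, Nat.mod_lt _ hB, Nat.mod_lt _ hB⟩
        · intro q hq
          simp only [Finset.mem_product, Finset.mem_range] at *
          exact ⟨crt_lt (Nat.mul_pos hA hB) u v _ _, crt_lt (Nat.mul_pos hA hB) u v _ _,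
            crt_lt (Nat.mul_pos hA hB) u v _ _⟩
        · rintro ⟨x, y, z⟩ hp
          simp only [Finset.mem_product, Finset.mem_range] at hp
          obtain ⟨hx, hy, hz⟩ := hp
          simp only [Prod.mk.injEq]
          exact ⟨crt_left_inv hA hB hAB hu hv hx,
            crt_left_inv hA hB hAB hu hv hy, crt_left_inv hA hB hAB hu hv hz⟩
        · rintro ⟨⟨x1, y1, z1⟩, x2, y2, z2⟩ hq
          simp only [Finset.mem_product, Finset.mem_range] at hq
          obtain ⟨⟨hx1, hy1, hz1⟩, hx2, hy2, hz2⟩ := hq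
          simp only [Prod.mk.injEq]
          exact ⟨⟨crt_right_inv_left hA hB hu hx1, crt_right_inv_left hA hB hu hy1,
            crt_right_inv_left hA hB hu hz1⟩,
            crt_right_inv_right hA hB hv hx2, crt_right_inv_right hA hB hv hy2,
            crt_right_inv_right hA hB hv hz2⟩
        · intro p hp
          exact main p.1 p.2.1 p.2.2
    _ = (∑ x ∈ range A, ∑ y ∈ range A, ∑ z ∈ range A,
          (if q₁ ∣ (x ^ 2 + y ^ 2 + z ^ 2 + z + 1) ∧ q₃ ∣ (x ^ 2 + y ^ 2 + z ^ 2 + z + 2)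
            then e ((((l * u) * (x : ℤ) + (m * u) * (y : ℤ) + (n * u) * (z : ℤ) : ℤ) : ℝ)
              / ((q₁ * q₃ : ℕ) : ℝ)) else 0))
        * (∑ x ∈ range B, ∑ y ∈ range B, ∑ z ∈ range B,
          (if q₂ ∣ (x ^ 2 + y ^ 2 + z ^ 2 + z + 1) ∧ q₄ ∣ (x ^ 2 + y ^ 2 + z ^ 2 + z + 2)
            then e ((((l * v) * (x : ℤ) + (m * v) * (y : ℤ) + (n * v) * (z : ℤ) : ℤ) : ℝ)
              / ((q₂ * q₄ : ℕ) : ℝ)) else 0)) := by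
        rw [triple_prod (range A), triple_prod (range B), Finset.sum_mul_sum,
          Finset.sum_product]
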